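/- A countable group G is left-orderable if and only if G is isomorphic to a subgroup of the group of orientation-preserving homeomorphisms of the real line. Moreover, the action on ℝ can be chosen so that some point has trivial stabilizer. -/

import Mathlib

open Function

noncomputable section

namespace Stmt10Aux

/-! ### Extension of order isomorphisms of ℚ to order isomorphisms of ℝ -/

def extFun (f : ℚ ≃o ℚ) (x : ℝ) : ℝ :=
  sSup ((fun q : ℚ => (f q : ℝ)) '' {q : ℚ | (q : ℝ) < x})

lemma extSet_nonempty (f : ℚ ≃o ℚ) (x : ℝ) :
    ((fun q : ℚ => (f q : ℝ)) '' {q : ℚ | (q : ℝ) < x}).Nonempty := by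
  obtain ⟨q, hq⟩ := exists_rat_lt x
  exact ⟨_, ⟨q, hq, rfl⟩⟩

lemma extSet_bdd (f : ℚ ≃o ℚ) (x : ℝ) :
    BddAbove ((fun q : ℚ => (f q : ℝ)) '' {q : ℚ | (q : ℝ) < x}) := by
  obtain ⟨r, hr⟩ := exists_rat_gt x
  refine ⟨(f r : ℝ), ?_⟩
  rintro y ⟨q, hq, rfl⟩
  have hqr : q < r := by exact_mod_cast hq.trans hr
  show ((f q : ℚ) : ℝ) ≤ ((f r : ℚ) : ℝ)
  exact_mod_cast (f.lt_iff_lt.mpr hqr).le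

lemma le_extFun (f : ℚ ≃o ℚ) {q : ℚ} {x : ℝ} (h : (q : ℝ) < x) : (f q : ℝ) ≤ extFun f x :=
  le_csSup (extSet_bdd f x) ⟨q, h, rfl⟩

lemma extFun_le (f : ℚ ≃o ℚ) {r : ℚ} {x : ℝ} (h : x ≤ (r : ℝ)) : extFun f x ≤ (f r : ℝ) := by
  refine csSup_le (extSet_nonempty f x) ?_
  rintro y ⟨q, hq, rfl⟩
  have hqr : q < r := by exact_mod_cast lt_of_lt_of_le hq h
  show ((f q : ℚ) : ℝ) ≤ ((f r : ℚ) : ℝ)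
  exact_mod_cast (f.lt_iff_lt.mpr hqr).le

lemma extFun_rat (f : ℚ ≃o ℚ) (q : ℚ) : extFun f (q : ℝ) = (f q : ℝ) := by
  refine le_antisymm (extFun_le f le_rfl) ?_
  by_contra h
  push_neg at h
  obtain ⟨s, hs1, hs2⟩ := exists_rat_btwn h
  have hsq : s < f q := by exact_mod_cast hs2
  have hsymm : f.symm s < q := by
    rw [← f.lt_iff_lt, f.apply_symm_apply]; exact hsq
  have h2 : (f (f.symm s) : ℝ) ≤ extFun f (q : ℝ) := le_extFun f (by exact_mod_cast hsymm)
  rw [f.apply_symm_apply] at h2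
  exact absurd (lt_of_lt_of_le hs1 h2) (lt_irrefl _)

lemma extFun_id (x : ℝ) : extFun (OrderIso.refl ℚ) x = x := by
  refine le_antisymm (csSup_le (extSet_nonempty _ x) ?_) ?_
  · rintro y ⟨q, hq, rfl⟩
    exact le_of_lt (by simpa using hq)
  · by_contra h
    push_neg at h
    obtain ⟨s, hs1, hs2⟩ := exists_rat_btwn h
    have h2 : ((OrderIso.refl ℚ) s : ℝ) ≤ extFun (OrderIso.refl ℚ) x := le_extFun _ hs2
    simp only [OrderIso.refl_apply] at h2
    exact absurd (lt_of_lt_of_le hs1 h2) (lt_irrefl _)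

lemma extFun_comp (f g : ℚ ≃o ℚ) (x : ℝ) :
    extFun f (extFun g x) = extFun (g.trans f) x := by
  refine le_antisymm (csSup_le (extSet_nonempty f _) ?_) (csSup_le (extSet_nonempty _ x) ?_)
  · rintro y ⟨p, hp, rfl⟩
    obtain ⟨a, ⟨qq, hq, rfl⟩, hpa⟩ := exists_lt_of_lt_csSup (extSet_nonempty g x) hp
    have hpa' : (p : ℝ) < ((g qq : ℚ) : ℝ) := hpa
    have hpq : p < g qq := by exact_mod_cast hpa'
    have h1 : (f p : ℝ) ≤ (f (g qq) : ℝ) := by exact_mod_cast (f.lt_iff_lt.mpr hpq).le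
    exact h1.trans (le_extFun (g.trans f) hq)
  · rintro y ⟨p, hp, rfl⟩
    have hp' : (p : ℝ) < x := hp
    obtain ⟨s, hs1, hs2⟩ := exists_rat_btwn hp'
    have hps : p < s := by exact_mod_cast hs1
    have h1 : (g p : ℝ) < extFun g x := by
      have : ((g p : ℚ) : ℝ) < ((g s : ℚ) : ℝ) := by exact_mod_cast g.lt_iff_lt.mpr hps
      exact lt_of_lt_of_le this (le_extFun g hs2)
    exact le_extFun f h1

lemma extFun_strictMono (f : ℚ ≃o ℚ) : StrictMono (extFun f) := by
  intro x y hxy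
  obtain ⟨q1, h1, h2⟩ := exists_rat_btwn hxy
  obtain ⟨q2, h3, h4⟩ := exists_rat_btwn h2
  have hq12 : q1 < q2 := by exact_mod_cast h3
  calc extFun f x ≤ (f q1 : ℝ) := extFun_le f h1.le
    _ < (f q2 : ℝ) := by exact_mod_cast f.lt_iff_lt.mpr hq12
    _ ≤ extFun f y := le_extFun f h4

lemma extFun_symm_cancel (f : ℚ ≃o ℚ) (x : ℝ) : extFun f (extFun f.symm x) = x := by
  rw [extFun_comp]
  have h : f.symm.trans f = OrderIso.refl ℚ := by
    apply OrderIso.ext; funext z; simp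
  rw [h, extFun_id]

def extIso (f : ℚ ≃o ℚ) : ℝ ≃o ℝ :=
  StrictMono.orderIsoOfSurjective _ (extFun_strictMono f)
    (fun y => ⟨extFun f.symm y, extFun_symm_cancel f y⟩)

lemma extIso_apply (f : ℚ ≃o ℚ) (x : ℝ) : extIso f x = extFun f x := rfl

def extHom : (ℚ ≃o ℚ) →* (ℝ ≃o ℝ) where
  toFun := extIso
  map_one' := by
    apply OrderIso.ext; funext x
    show extFun (1 : ℚ ≃o ℚ) x = x
    rw [show (1 : ℚ ≃o ℚ) = OrderIso.refl ℚ from rfl, extFun_id]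
  map_mul' f g := by
    apply OrderIso.ext; funext x
    show extFun (f * g) x = extFun f (extFun g x)
    rw [extFun_comp, show f * g = g.trans f from rfl]

lemma extHom_injective : Injective extHom := by
  intro u v h
  apply OrderIso.ext; funext p
  have h1 : extFun u (p : ℝ) = extFun v (p : ℝ) := by
    have := DFunLike.congr_fun h ((p : ℝ))
    simpa [extHom, extIso_apply] using this
  rw [extFun_rat, extFun_rat] at h1
  exact_mod_cast h1

def conjHom {α β : Type*} [Preorder α] [Preorder β] (e : α ≃o β) : (α ≃o α) →* (β ≃o β) where
  toFun u := (e.symm.trans u).trans e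
  map_one' := by
    apply OrderIso.ext; funext x
    simp [show ∀ y : α, (1 : α ≃o α) y = y from fun _ => rfl]
  map_mul' u v := by
    apply OrderIso.ext; funext x
    show e ((u * v) (e.symm x)) = e (u (e.symm (e (v (e.symm x)))))
    rw [e.symm_apply_apply]
    rfl

lemma conjHom_injective {α β : Type*} [Preorder α] [Preorder β] (e : α ≃o β) :
    Injective (conjHom e) := by
  intro u v h
  apply OrderIso.ext; funext x
  have h1 := DFunLike.congr_fun h (e x)
  simp only [conjHom, MonoidHom.coe_mk, OneHom.coe_mk, OrderIso.trans_apply,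
    e.symm_apply_apply] at h1
  exact e.injective h1

end Stmt10Aux

end

/-- A countable group is left-orderable iff it embeds in the group `ℝ ≃o ℝ` of
orientation-preserving homeomorphisms of the line; moreover the action can be
chosen so that some point has trivial stabilizer. -/
theorem stmt10 {G : Type*} [Group G] [Countable G] :
    ((∃ r : G → G → Prop, IsStrictTotalOrder G r ∧
        ∀ a b c : G, r a b ↔ r (c * a) (c * b)) ↔
      ∃ f : G →* (ℝ ≃o ℝ), Function.Injective f) ∧
    ((∃ r : G → G → Prop, IsStrictTotalOrder G r ∧
        ∀ a b c : G, r a b ↔ r (c * a) (c * b)) →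
      ∃ f : G →* (ℝ ≃o ℝ), Function.Injective f ∧
        ∃ x : ℝ, ∀ g : G, f g x = x → g = 1) := by
  classical
  have forward : (∃ r : G → G → Prop, IsStrictTotalOrder G r ∧
        ∀ a b c : G, r a b ↔ r (c * a) (c * b)) →
      ∃ f : G →* (ℝ ≃o ℝ), Function.Injective f ∧
        ∃ x : ℝ, ∀ g : G, f g x = x → g = 1 := by
    rintro ⟨r, hsto, hinv⟩
    letI := hsto
    letI : DecidableRel r := Classical.decRel r
    letI : LinearOrder G := linearOrderOfSTO r
    have hlt : ∀ a b : G, a < b ↔ r a b := fun a b => Iff.rfl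
    haveI : Countable (Lex (G × ℚ)) := Countable.of_equiv _ toLex
    haveI : Nonempty (Lex (G × ℚ)) := ⟨toLex (1, 0)⟩
    haveI : DenselyOrdered (Lex (G × ℚ)) := by
      constructor
      intro a b hab
      rcases Prod.Lex.lt_iff.1 hab with h | ⟨h1, h2⟩
      · refine ⟨toLex ((ofLex a).1, (ofLex a).2 + 1), ?_, ?_⟩
        · exact Prod.Lex.lt_iff.2 (Or.inr ⟨rfl, lt_add_one _⟩)
        · exact Prod.Lex.lt_iff.2 (Or.inl h)
      · obtain ⟨m, hm1, hm2⟩ := exists_between h2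
        refine ⟨toLex ((ofLex a).1, m), ?_, ?_⟩
        · exact Prod.Lex.lt_iff.2 (Or.inr ⟨rfl, hm1⟩)
        · exact Prod.Lex.lt_iff.2 (Or.inr ⟨h1, hm2⟩)
    haveI : NoMaxOrder (Lex (G × ℚ)) := by
      constructor
      intro a
      exact ⟨toLex ((ofLex a).1, (ofLex a).2 + 1),
        Prod.Lex.lt_iff.2 (Or.inr ⟨rfl, lt_add_one _⟩)⟩
    haveI : NoMinOrder (Lex (G × ℚ)) := by
      constructor
      intro a
      refine ⟨toLex ((ofLex a).1, (ofLex a).2 - 1),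
        Prod.Lex.lt_iff.2 (Or.inr ⟨rfl, ?_⟩)⟩
      exact sub_one_lt _
    obtain ⟨e⟩ := Order.iso_of_countable_dense (Lex (G × ℚ)) ℚ
    -- the action of G on Lex (G × ℚ)
    have act_mono : ∀ g : G, StrictMono
        (fun z : Lex (G × ℚ) => toLex (g * (ofLex z).1, (ofLex z).2)) := by
      intro g z w hzw
      rcases Prod.Lex.lt_iff.1 hzw with h | ⟨h1, h2⟩
      · exact Prod.Lex.lt_iff.2 (Or.inl ((hlt _ _).2 ((hinv _ _ g).1 ((hlt _ _).1 h))))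
      · exact Prod.Lex.lt_iff.2 (Or.inr ⟨congrArg (fun t => g * t) h1, h2⟩)
    have act_surj : ∀ g : G, Function.Surjective
        (fun z : Lex (G × ℚ) => toLex (g * (ofLex z).1, (ofLex z).2)) := by
      intro g z
      refine ⟨toLex (g⁻¹ * (ofLex z).1, (ofLex z).2), ?_⟩
      simp [mul_inv_cancel_left]
    let A : G →* (Lex (G × ℚ) ≃o Lex (G × ℚ)) := {
      toFun := fun g => StrictMono.orderIsoOfSurjective _ (act_mono g) (act_surj g)
      map_one' := by
        apply OrderIso.ext; funext z
        show toLex (1 * (ofLex z).1, (ofLex z).2) = z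
        simp
      map_mul' := fun g h => by
        apply OrderIso.ext; funext z
        show toLex (g * h * (ofLex z).1, (ofLex z).2)
            = toLex (g * (ofLex (toLex (h * (ofLex z).1, (ofLex z).2))).1,
                (ofLex (toLex (h * (ofLex z).1, (ofLex z).2))).2)
        simp [mul_assoc] }
    have hA : Function.Injective A := by
      intro g g' h
      have h1 := DFunLike.congr_fun h (toLex ((1 : G), (0 : ℚ)))
      have h2 : toLex (g * 1, (0 : ℚ)) = toLex (g' * 1, (0 : ℚ)) := h1
      have h3 : (g * 1, (0 : ℚ)) = (g' * 1, (0 : ℚ)) := toLex.injective h2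
      simpa using congrArg Prod.fst h3
    refine ⟨Stmt10Aux.extHom.comp ((Stmt10Aux.conjHom e).comp A), ?_, ?_⟩
    · have : Function.Injective
          (⇑Stmt10Aux.extHom ∘ ⇑(Stmt10Aux.conjHom e) ∘ ⇑A) :=
        Stmt10Aux.extHom_injective.comp ((Stmt10Aux.conjHom_injective e).comp hA)
      simpa [MonoidHom.coe_comp] using this
    · refine ⟨((e (toLex ((1 : G), (0 : ℚ)))) : ℝ), ?_⟩
      intro g hg
      set q0 : ℚ := e (toLex ((1 : G), (0 : ℚ))) with hq0
      have h1 : Stmt10Aux.extFun (Stmt10Aux.conjHom e (A g)) (q0 : ℝ) = (q0 : ℝ) := hg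
      rw [Stmt10Aux.extFun_rat] at h1
      have h2 : (Stmt10Aux.conjHom e (A g)) q0 = q0 := by exact_mod_cast h1
      have h3 : e ((A g) (e.symm q0)) = q0 := h2
      rw [hq0, e.symm_apply_apply] at h3
      have h4 : (A g) (toLex ((1 : G), (0 : ℚ))) = toLex ((1 : G), (0 : ℚ)) := e.injective h3
      have h5 : toLex (g * 1, (0 : ℚ)) = toLex ((1 : G), (0 : ℚ)) := h4
      have h6 := congrArg Prod.fst (toLex.injective h5)
      simpa using h6
  have backward : (∃ f : G →* (ℝ ≃o ℝ), Function.Injective f) →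
      (∃ r : G → G → Prop, IsStrictTotalOrder G r ∧
        ∀ a b c : G, r a b ↔ r (c * a) (c * b)) := by
    rintro ⟨f, hf⟩
    obtain ⟨q, hq⟩ := exists_surjective_nat ℚ
    let φ : G → Lex (ℕ → ℝ) := fun g => toLex (fun n => f g ((q n : ℚ) : ℝ))
    have hφ : Function.Injective φ := by
      intro a b h
      apply hf
      apply OrderIso.ext
      refine Continuous.ext_on (Rat.denseRange_cast (𝕜 := ℝ)) (f a).continuous
        (f b).continuous ?_
      rintro _ ⟨p, rfl⟩
      obtain ⟨n, rfl⟩ := hq p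
      exact congrFun (toLex.injective h) n
    have key : ∀ (σ : ℝ ≃o ℝ) (u v : ℕ → ℝ),
        toLex (fun n => σ (u n)) < toLex (fun n => σ (v n)) ↔ toLex u < toLex v := by
      intro σ u v
      constructor
      · intro h
        obtain ⟨i, hji, hi⟩ : ∃ i, (∀ j, j < i → σ (u j) = σ (v j)) ∧ σ (u i) < σ (v i) := h
        exact ⟨i, fun j hj => σ.injective (hji j hj), σ.lt_iff_lt.1 hi⟩
      · intro h
        obtain ⟨i, hji, hi⟩ : ∃ i, (∀ j, j < i → u j = v j) ∧ u i < v i := h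
        exact ⟨i, fun j hj => congrArg σ (hji j hj), σ.lt_iff_lt.2 hi⟩
    refine ⟨fun a b => φ a < φ b,
      { trichotomous := ?_, irrefl := ?_, trans := ?_ }, ?_⟩
    · intro a b
      rcases lt_trichotomy (φ a) (φ b) with h | h | h
      · exact fun h1 _ => absurd h h1
      · exact fun _ _ => hφ h
      · exact fun _ h2 => absurd h h2
    · intro a
      exact lt_irrefl (φ a)
    · intro a b c h1 h2
      exact lt_trans h1 h2
    · intro a b c
      have e1 : φ (c * a) = toLex (fun n => f c (f a ((q n : ℚ) : ℝ))) := by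
        simp only [φ, map_mul]; rfl
      have e2 : φ (c * b) = toLex (fun n => f c (f b ((q n : ℚ) : ℝ))) := by
        simp only [φ, map_mul]; rfl
      constructor
      · intro h
        show φ (c * a) < φ (c * b)
        rw [e1, e2]
        exact (key (f c) _ _).2 h
      · intro h
        replace h : φ (c * a) < φ (c * b) := h
        rw [e1, e2] at h
        exact (key (f c) _ _).1 h
  exact ⟨⟨fun h => (forward h).imp fun f hf => hf.1, backward⟩, forward⟩
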